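/- Let c > 0 and a, b ∈ ℝ with 0 < a² + b² < 1 and b² > a². Define h ≥ 0 by h² = c(1 − a² − b²)(b² − a²)²/(4(1−a²)(1−b²)). Then h·(2 − a² − b²) = √(h² + c(1 − a² − b²))·(b² − a²), i.e., h satisfies the biharmonicity equation h(2 − a² − b²) + √(h² + c(1−a²−b²))(a² − b²) = 0. -/

import Mathlib

/-- For `c > 0`, `0 < a² + b² < 1`, `b² > a²`, the number
`h = √(c(1-a²-b²)(b²-a²)²/(4(1-a²)(1-b²))) ≥ 0` satisfies
`h(2-a²-b²) = √(h² + c(1-a²-b²))·(b²-a²)`, i.e. the biharmonicity equation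
`h(2-a²-b²) + √(h² + c(1-a²-b²))(a²-b²) = 0`. -/
theorem stmt_10 (a b c h : ℝ) (hc : 0 < c)
    (h1 : 0 < a ^ 2 + b ^ 2) (h2 : a ^ 2 + b ^ 2 < 1) (hba : a ^ 2 < b ^ 2)
    (hh : h = Real.sqrt (c * (1 - a ^ 2 - b ^ 2) * (b ^ 2 - a ^ 2) ^ 2
      / (4 * (1 - a ^ 2) * (1 - b ^ 2)))) :
    h * (2 - a ^ 2 - b ^ 2)
        = Real.sqrt (h ^ 2 + c * (1 - a ^ 2 - b ^ 2)) * (b ^ 2 - a ^ 2)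
    ∧ h * (2 - a ^ 2 - b ^ 2)
        + Real.sqrt (h ^ 2 + c * (1 - a ^ 2 - b ^ 2)) * (a ^ 2 - b ^ 2) = 0 := by
  have ha1 : a ^ 2 < 1 := by nlinarith [sq_nonneg b]
  have hb1 : b ^ 2 < 1 := by nlinarith [sq_nonneg a]
  have hT : 0 < 1 - a ^ 2 - b ^ 2 := by linarith
  have hden : 0 < 4 * (1 - a ^ 2) * (1 - b ^ 2) := by nlinarith
  have harg : 0 ≤ c * (1 - a ^ 2 - b ^ 2) * (b ^ 2 - a ^ 2) ^ 2
      / (4 * (1 - a ^ 2) * (1 - b ^ 2)) := by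
    apply div_nonneg _ hden.le
    exact mul_nonneg (mul_nonneg hc.le hT.le) (sq_nonneg _)
  have hhnn : 0 ≤ h := hh ▸ Real.sqrt_nonneg _
  have hsq : h ^ 2 = c * (1 - a ^ 2 - b ^ 2) * (b ^ 2 - a ^ 2) ^ 2
      / (4 * (1 - a ^ 2) * (1 - b ^ 2)) := by
    rw [hh, Real.sq_sqrt harg]
  have hargs : 0 ≤ h ^ 2 + c * (1 - a ^ 2 - b ^ 2) := by nlinarith [sq_nonneg h]
  have hmain : h * (2 - a ^ 2 - b ^ 2)
      = Real.sqrt (h ^ 2 + c * (1 - a ^ 2 - b ^ 2)) * (b ^ 2 - a ^ 2) := by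
    have hL : 0 ≤ h * (2 - a ^ 2 - b ^ 2) := by nlinarith
    have hR : 0 ≤ Real.sqrt (h ^ 2 + c * (1 - a ^ 2 - b ^ 2)) * (b ^ 2 - a ^ 2) := by
      have := Real.sqrt_nonneg (h ^ 2 + c * (1 - a ^ 2 - b ^ 2))
      nlinarith
    have hsq2 : (h * (2 - a ^ 2 - b ^ 2)) ^ 2
        = (Real.sqrt (h ^ 2 + c * (1 - a ^ 2 - b ^ 2)) * (b ^ 2 - a ^ 2)) ^ 2 := by
      rw [mul_pow, mul_pow, Real.sq_sqrt hargs]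
      have hden' : (4 * (1 - a ^ 2) * (1 - b ^ 2)) ≠ 0 := ne_of_gt hden
      field_simp [hden'] at hsq ⊢
      have hq : (1 - a ^ 2) * (1 - b ^ 2) ≠ 0 := ne_of_gt (by nlinarith)
      rw [eq_div_iff hq] at hsq
      linear_combination hsq
    nlinarith [hsq2]
  exact ⟨hmain, by linarith [hmain, (by ring : Real.sqrt (h ^ 2 + c * (1 - a ^ 2 - b ^ 2)) * (a ^ 2 - b ^ 2) = -(Real.sqrt (h ^ 2 + c * (1 - a ^ 2 - b ^ 2)) * (b ^ 2 - a ^ 2)))]⟩
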